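/- Fix an integer H ≥ 1 and let η_n = (H+1)/(H+n). For any integer N > 0 and any real number a with 1/2 ≤ a ≤ 1, one has 1/N^a ≤ Σ_{n=1}^{N} η_n^N / n^a ≤ 2/N^a. -/
import Mathlib


/-- **Learning-rate sum bounds** (Lemma 1, eq. (12) of the paper).
Fix an integer `H ≥ 1` and let `η n = (H+1)/(H+n)`; for `1 ≤ n ≤ N` let
`η_n^N = η_n ∏_{i=n+1}^N (1 - η_i)` (so `η_n^N = η_n` when `N = n`), and `η_n^N = 0`
for `N < n`.  Then for every integer `N > 0` and every real `1/2 ≤ a ≤ 1`,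
`1/N^a ≤ ∑_{n=1}^N η_n^N / n^a ≤ 2/N^a`. -/
theorem learning_rate_rpow_sum_bounds
    (H : ℕ) (hH : 1 ≤ H)
    (η : ℕ → ℝ) (hη : ∀ n : ℕ, η n = (H + 1 : ℝ) / (H + n))
    (ηN : ℕ → ℕ → ℝ)
    (hηN_lt : ∀ n N : ℕ, N < n → ηN n N = 0)
    (hηN_eq : ∀ n : ℕ, ηN n n = η n)
    (hηN_gt : ∀ n N : ℕ, n < N → ηN n N = η n * ∏ i ∈ Finset.Icc (n + 1) N, (1 - η i))
    (N : ℕ) (hN : 0 < N)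
    (a : ℝ) (ha₁ : 1 / 2 ≤ a) (ha₂ : a ≤ 1) :
    1 / (N : ℝ) ^ a ≤ ∑ n ∈ Finset.Icc 1 N, ηN n N / (n : ℝ) ^ a ∧
      ∑ n ∈ Finset.Icc 1 N, ηN n N / (n : ℝ) ^ a ≤ 2 / (N : ℝ) ^ a := by
  have ha0 : (0:ℝ) ≤ a := by linarith
  have hH1 : (1:ℝ) ≤ (H:ℝ) := by exact_mod_cast hH
  have hden : ∀ n : ℕ, (0:ℝ) < (H:ℝ) + n := fun n => by
    have : (0:ℝ) ≤ (n:ℝ) := Nat.cast_nonneg n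
    linarith
  have hη_pos : ∀ n : ℕ, 0 < η n := fun n => by
    rw [hη]; exact div_pos (by linarith) (hden n)
  have hη_le_one : ∀ n : ℕ, 1 ≤ n → η n ≤ 1 := fun n hn => by
    rw [hη, div_le_one (hden n)]
    have : (1:ℝ) ≤ (n:ℝ) := by exact_mod_cast hn
    linarith
  have key : ∀ n M : ℕ, n ≤ M → ηN n M = η n * ∏ i ∈ Finset.Icc (n+1) M, (1 - η i) := by
    intro n M h
    rcases eq_or_lt_of_le h with rfl | h
    · rw [hηN_eq, Finset.Icc_eq_empty (by omega), Finset.prod_empty, mul_one]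
    · exact hηN_gt n M h
  have hηN_nonneg : ∀ n M : ℕ, 1 ≤ n → 0 ≤ ηN n M := by
    intro n M hn
    rcases lt_or_ge M n with h | h
    · rw [hηN_lt n M h]
    · rw [key n M h]
      refine mul_nonneg (hη_pos n).le (Finset.prod_nonneg fun i hi => ?_)
      simp only [Finset.mem_Icc] at hi
      have := hη_le_one i (by omega)
      linarith
  have step : ∀ M : ℕ, 1 ≤ M → ∀ f : ℕ → ℝ,
      ∑ n ∈ Finset.Icc 1 (M+1), ηN n (M+1) * f n
        = (1 - η (M+1)) * ∑ n ∈ Finset.Icc 1 M, ηN n M * f n + η (M+1) * f (M+1) := by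
    intro M hM f
    rw [Finset.sum_Icc_succ_top (by omega : 1 ≤ M+1), hηN_eq, Finset.mul_sum]
    congr 1
    refine Finset.sum_congr rfl fun n hn => ?_
    simp only [Finset.mem_Icc] at hn
    rw [key n (M+1) (by omega), key n M hn.2,
        Finset.prod_Icc_succ_top (by omega : n+1 ≤ M+1)]
    ring
  have sum_one : ∀ M : ℕ, 1 ≤ M → ∑ n ∈ Finset.Icc 1 M, ηN n M = 1 := by
    intro M hM
    induction M, hM using Nat.le_induction with
    | base =>
      rw [Finset.Icc_self, Finset.sum_singleton, hηN_eq, hη]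
      push_cast
      exact div_self (by linarith)
    | succ M hM ih =>
      have h := step M hM (fun _ => 1)
      simp only [mul_one] at h
      rw [h, ih]
      ring
  have upper : ∀ M : ℕ, 1 ≤ M →
      ∑ n ∈ Finset.Icc 1 M, ηN n M * ((n:ℝ)^a)⁻¹ ≤ 2 * ((M:ℝ)^a)⁻¹ := by
    intro M hM
    induction M, hM using Nat.le_induction with
    | base =>
      rw [Finset.Icc_self, Finset.sum_singleton, hηN_eq, hη]
      push_cast
      rw [Real.one_rpow]
      rw [div_self (by linarith : (H:ℝ)+1 ≠ 0)]
      norm_num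
    | succ M hM ih =>
      rw [step M hM]
      have hm1 : (1:ℝ) ≤ (M:ℝ) := by exact_mod_cast hM
      have hmpos : (0:ℝ) < (M:ℝ) := by linarith
      have hx : (0:ℝ) < (M:ℝ)^a := Real.rpow_pos_of_pos hmpos a
      have hy : (0:ℝ) < ((M:ℝ)+1)^a := Real.rpow_pos_of_pos (by linarith) a
      -- key: M * (M+1)^a ≤ (M+1) * M^a
      have hb : (1:ℝ) ≤ ((M:ℝ)+1)/(M:ℝ) := by
        rw [one_le_div hmpos]; linarith
      have hrp := Real.rpow_le_rpow_of_exponent_le hb ha₂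
      rw [Real.rpow_one, Real.div_rpow (by linarith) hmpos.le] at hrp
      have hkey : (M:ℝ) * ((M:ℝ)+1)^a ≤ ((M:ℝ)+1) * (M:ℝ)^a := by
        rw [div_le_div_iff₀ hx hmpos] at hrp
        linarith
      have hη1 : 0 ≤ 1 - η (M+1) := by linarith [hη_le_one (M+1) (by omega)]
      have hcast : ((M+1 : ℕ):ℝ) = (M:ℝ)+1 := by push_cast; ring
      have hstep2 : (1 - η (M+1)) * (2 * ((M:ℝ)^a)⁻¹) + η (M+1) * ((((M+1:ℕ)):ℝ)^a)⁻¹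
          ≤ 2 * ((((M+1:ℕ)):ℝ)^a)⁻¹ := by
        rw [hcast, hη]
        push_cast
        have hd : (0:ℝ) < (H:ℝ) + (M+1) := by linarith
        rw [← sub_nonneg]
        have e : 2 * (((M:ℝ)+1)^a)⁻¹
            - ((1 - ((H:ℝ)+1)/((H:ℝ)+((M:ℝ)+1))) * (2 * ((M:ℝ)^a)⁻¹)
              + ((H:ℝ)+1)/((H:ℝ)+((M:ℝ)+1)) * (((M:ℝ)+1)^a)⁻¹)
            = (((H:ℝ)+2*(M:ℝ)+1) * (M:ℝ)^a - 2*(M:ℝ)*(((M:ℝ)+1)^a))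
              / (((H:ℝ)+((M:ℝ)+1)) * (M:ℝ)^a * (((M:ℝ)+1)^a)) := by
          field_simp
          ring
        rw [e]
        apply div_nonneg _ (by positivity)
        nlinarith [hkey, mul_nonneg (sub_nonneg.2 hH1) hx.le]
      calc (1 - η (M+1)) * ∑ n ∈ Finset.Icc 1 M, ηN n M * ((n:ℝ)^a)⁻¹
            + η (M+1) * ((((M+1:ℕ)):ℝ)^a)⁻¹
          ≤ (1 - η (M+1)) * (2 * ((M:ℝ)^a)⁻¹) + η (M+1) * ((((M+1:ℕ)):ℝ)^a)⁻¹ := by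
            gcongr
        _ ≤ 2 * ((((M+1:ℕ)):ℝ)^a)⁻¹ := hstep2
  have hN1 : 1 ≤ N := hN
  have hsum := sum_one N hN1
  have hNr : (0:ℝ) < (N:ℝ) := by exact_mod_cast hN
  have hNpos : (0:ℝ) < (N:ℝ)^a := Real.rpow_pos_of_pos hNr a
  constructor
  · have hterm : ∀ n ∈ Finset.Icc 1 N, ηN n N * ((N:ℝ)^a)⁻¹ ≤ ηN n N * ((n:ℝ)^a)⁻¹ := by
      intro n hn
      simp only [Finset.mem_Icc] at hn
      refine mul_le_mul_of_nonneg_left ?_ (hηN_nonneg n N hn.1)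
      have hnr : (0:ℝ) < (n:ℝ) := by exact_mod_cast hn.1
      have : (n:ℝ)^a ≤ (N:ℝ)^a :=
        Real.rpow_le_rpow hnr.le (by exact_mod_cast hn.2) ha0
      exact inv_anti₀ (Real.rpow_pos_of_pos hnr a) this
    calc 1/(N:ℝ)^a = ∑ n ∈ Finset.Icc 1 N, ηN n N * ((N:ℝ)^a)⁻¹ := by
          rw [← Finset.sum_mul, hsum, one_mul, one_div]
      _ ≤ ∑ n ∈ Finset.Icc 1 N, ηN n N * ((n:ℝ)^a)⁻¹ := Finset.sum_le_sum hterm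
      _ = ∑ n ∈ Finset.Icc 1 N, ηN n N / (n:ℝ)^a := by
          simp [div_eq_mul_inv]
  · calc ∑ n ∈ Finset.Icc 1 N, ηN n N / (n:ℝ)^a
        = ∑ n ∈ Finset.Icc 1 N, ηN n N * ((n:ℝ)^a)⁻¹ := by simp [div_eq_mul_inv]
      _ ≤ 2 * ((N:ℝ)^a)⁻¹ := upper N hN1
      _ = 2 / (N:ℝ)^a := by rw [div_eq_mul_inv]
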